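/- Let A_1, A_2, A_3, A_4 ⊆ F_2^n be nonempty and coherently δ-flat for some 0 < δ < 1/2, meaning that for every ξ ∈ F_2^n either ξ ∈ Spec_{9/10}(A_i) for all i, or ξ ∉ Spec_δ(A_i) for all i. Then Λ := Spec_{9/10}(A_1) ∩ Spec_{9/10}(A_2) ∩ Spec_{9/10}(A_3) ∩ Spec_{9/10}(A_4) is a linear subspace of F_2^n. -/

import Mathlib

open Finset

/-- Fourier transform of the indicator of A ⊆ 𝔽₂ⁿ. -/
noncomputable def ftA {n : ℕ} (A : Finset (Fin n → ZMod 2)) (ξ : Fin n → ZMod 2) : ℝ :=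
  ((2 : ℝ) ^ n)⁻¹ * ∑ x ∈ A, (-1 : ℝ) ^ (∑ i, ξ i * x i : ZMod 2).val

/-- Spec_α(A) := {ξ : |1̂_A(ξ)| ≥ α|A|/2ⁿ}. -/
noncomputable def Spec {n : ℕ} (α : ℝ) (A : Finset (Fin n → ZMod 2)) :
    Set (Fin n → ZMod 2) :=
  {ξ | α * A.card / 2 ^ n ≤ |ftA A ξ|}

private lemma chi_add (a b : ZMod 2) :
    (-1 : ℝ) ^ (a + b).val = (-1 : ℝ) ^ a.val * (-1 : ℝ) ^ b.val := by
  rw [ZMod.val_add, ← pow_add, ← neg_one_pow_eq_pow_mod_two]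

private lemma zero_mem_spec {n : ℕ} (A : Finset (Fin n → ZMod 2)) :
    (0 : Fin n → ZMod 2) ∈ Spec (9 / 10) A := by
  have h : ftA A 0 = (A.card : ℝ) / 2 ^ n := by
    simp [ftA, div_eq_inv_mul]
  have h2 : (0 : ℝ) ≤ (A.card : ℝ) / 2 ^ n := by positivity
  simp only [Spec, Set.mem_setOf_eq, h, abs_of_nonneg h2]
  rw [div_le_div_iff₀ (by positivity) (by positivity)]
  nlinarith [Nat.cast_nonneg (α := ℝ) A.card, pow_pos (show (0:ℝ) < 2 by norm_num) n]

private lemma spec_add {n : ℕ} (A : Finset (Fin n → ZMod 2)) {ξ ξ' : Fin n → ZMod 2}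
    (h : ξ ∈ Spec (9 / 10) A) (h' : ξ' ∈ Spec (9 / 10) A) :
    (8 / 10 : ℝ) * A.card / 2 ^ n ≤ |ftA A (ξ + ξ')| := by
  set f : (Fin n → ZMod 2) → ℝ := fun x => (-1 : ℝ) ^ (∑ i, ξ i * x i : ZMod 2).val with hf
  set g : (Fin n → ZMod 2) → ℝ := fun x => (-1 : ℝ) ^ (∑ i, ξ' i * x i : ZMod 2).val with hg
  have hfg : ∀ x, (-1 : ℝ) ^ (∑ i, (ξ + ξ') i * x i : ZMod 2).val = f x * g x := by
    intro x
    have : (∑ i, (ξ + ξ') i * x i : ZMod 2) = (∑ i, ξ i * x i) + (∑ i, ξ' i * x i) := by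
      rw [← Finset.sum_add_distrib]
      exact Finset.sum_congr rfl fun i _ => by simp [add_mul]
    rw [this, chi_add]
  have hftsum : ftA A (ξ + ξ') = ((2 : ℝ) ^ n)⁻¹ * ∑ x ∈ A, f x * g x := by
    simp only [ftA]
    congr 1
    exact Finset.sum_congr rfl fun x _ => hfg x
  set σ : ℝ := if 0 ≤ ftA A ξ then 1 else -1 with hσ
  set σ' : ℝ := if 0 ≤ ftA A ξ' then 1 else -1 with hσ'
  have hσabs : σ * ftA A ξ = |ftA A ξ| := by
    rcases le_or_gt 0 (ftA A ξ) with h1 | h1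
    · simp [hσ, h1, abs_of_nonneg h1]
    · simp [hσ, not_le.2 h1, abs_of_neg h1]
  have hσ'abs : σ' * ftA A ξ' = |ftA A ξ'| := by
    rcases le_or_gt 0 (ftA A ξ') with h1 | h1
    · simp [hσ', h1, abs_of_nonneg h1]
    · simp [hσ', not_le.2 h1, abs_of_neg h1]
  have hfval : ∀ x, f x = 1 ∨ f x = -1 := fun x =>
    (Nat.even_or_odd _).imp (fun h => Even.neg_one_pow h) (fun h => Odd.neg_one_pow h)
  have hgval : ∀ x, g x = 1 ∨ g x = -1 := fun x => (Nat.even_or_odd _).imp (fun h => Even.neg_one_pow h) (fun h => Odd.neg_one_pow h)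
  have hσval : σ = 1 ∨ σ = -1 := by unfold σ; split <;> simp
  have hσ'val : σ' = 1 ∨ σ' = -1 := by unfold σ'; split <;> simp
  -- pointwise inequality
  have hpt : ∀ x ∈ A, σ * f x + σ' * g x - 1 ≤ (σ * σ') * (f x * g x) := by
    intro x _
    rcases hfval x with h1 | h1 <;> rcases hgval x with h2 | h2 <;>
      rcases hσval with h3 | h3 <;> rcases hσ'val with h4 | h4 <;>
      rw [h1, h2, h3, h4] <;> norm_num
  have hsum : σ * (∑ x ∈ A, f x) + σ' * (∑ x ∈ A, g x) - A.card
      ≤ (σ * σ') * ∑ x ∈ A, f x * g x := by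
    have := Finset.sum_le_sum hpt
    calc σ * (∑ x ∈ A, f x) + σ' * (∑ x ∈ A, g x) - A.card
        = ∑ x ∈ A, (σ * f x + σ' * g x - 1) := by
          rw [Finset.sum_sub_distrib, Finset.sum_add_distrib, ← Finset.mul_sum, ← Finset.mul_sum]
          simp
      _ ≤ ∑ x ∈ A, (σ * σ') * (f x * g x) := this
      _ = (σ * σ') * ∑ x ∈ A, f x * g x := by rw [Finset.mul_sum]
  have h2n : (0 : ℝ) < 2 ^ n := by positivity
  have hS : (9 / 10 : ℝ) * A.card ≤ σ * ∑ x ∈ A, f x := by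
    have := h
    simp only [Spec, Set.mem_setOf_eq] at this
    have h3 : σ * ftA A ξ = σ * (((2:ℝ)^n)⁻¹ * ∑ x ∈ A, f x) := by rw [ftA]
    rw [hσabs] at h3
    have := this.trans_eq h3
    rw [div_le_iff₀ h2n] at this
    have e : σ * (((2:ℝ)^n)⁻¹ * ∑ x ∈ A, f x) * 2^n = σ * ∑ x ∈ A, f x := by
      field_simp
    linarith [this, e.ge, e.le]
  have hS' : (9 / 10 : ℝ) * A.card ≤ σ' * ∑ x ∈ A, g x := by
    have := h'
    simp only [Spec, Set.mem_setOf_eq] at this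
    have h3 : σ' * ftA A ξ' = σ' * (((2:ℝ)^n)⁻¹ * ∑ x ∈ A, g x) := by rw [ftA]
    rw [hσ'abs] at h3
    have := this.trans_eq h3
    rw [div_le_iff₀ h2n] at this
    have e : σ' * (((2:ℝ)^n)⁻¹ * ∑ x ∈ A, g x) * 2^n = σ' * ∑ x ∈ A, g x := by
      field_simp
    linarith [this, e.ge, e.le]
  have hT : (8 / 10 : ℝ) * A.card ≤ (σ * σ') * ∑ x ∈ A, f x * g x := by
    nlinarith [hsum, hS, hS']
  have habsT : (σ * σ') * ∑ x ∈ A, f x * g x ≤ |∑ x ∈ A, f x * g x| := by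
    rcases hσval with h3 | h3 <;> rcases hσ'val with h4 | h4 <;> rw [h3, h4] <;>
      simp <;> [exact le_abs_self _; exact neg_le_abs _; exact neg_le_abs _; exact le_abs_self _]
  rw [hftsum, abs_mul, abs_of_nonneg (by positivity : (0:ℝ) ≤ ((2:ℝ)^n)⁻¹)]
  rw [div_le_iff₀ h2n]
  calc (8/10 : ℝ) * A.card ≤ |∑ x ∈ A, f x * g x| := le_trans hT habsT
    _ = ((2:ℝ)^n)⁻¹ * |∑ x ∈ A, f x * g x| * 2^n := by field_simp
  
theorem stmt_12 {n : ℕ} (A : Fin 4 → Finset (Fin n → ZMod 2))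
    (hA : ∀ i, (A i).Nonempty) {δ : ℝ} (hδ0 : 0 < δ) (hδ1 : δ < 1 / 2)
    (hflat : ∀ ξ : Fin n → ZMod 2,
      (∀ i, ξ ∈ Spec (9 / 10) (A i)) ∨ (∀ i, ξ ∉ Spec δ (A i))) :
    ∃ Λ : Submodule (ZMod 2) (Fin n → ZMod 2),
      (Λ : Set (Fin n → ZMod 2)) = ⋂ i, Spec (9 / 10) (A i) := by
  have key : ∀ ξ ξ' : Fin n → ZMod 2, (∀ i, ξ ∈ Spec (9/10) (A i)) →
      (∀ i, ξ' ∈ Spec (9/10) (A i)) → ∀ i, ξ + ξ' ∈ Spec (9/10) (A i) := by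
    intro ξ ξ' h h' i
    rcases hflat (ξ + ξ') with hc | hc
    · exact hc i
    · exfalso
      apply hc 0
      have h8 := spec_add (A 0) (h 0) (h' 0)
      simp only [Spec, Set.mem_setOf_eq]
      refine le_trans ?_ h8
      have : (0:ℝ) ≤ ((A 0).card : ℝ) := Nat.cast_nonneg _
      have h2n : (0:ℝ) < (2:ℝ)^n := by positivity
      have hδ8 : δ ≤ 8/10 := by linarith
      gcongr
  refine ⟨{ carrier := ⋂ i, Spec (9/10) (A i)
            add_mem' := ?_
            zero_mem' := ?_
            smul_mem' := ?_ }, rfl⟩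
  · intro a b ha hb
    simp only [Set.mem_iInter] at *
    exact key a b ha hb
  · simp only [Set.mem_iInter]
    exact fun i => zero_mem_spec (A i)
  · intro c x hx
    have : c = 0 ∨ c = 1 := by revert c; decide
    rcases this with rfl | rfl
    · simp only [zero_smul, Set.mem_iInter]
      exact fun i => zero_mem_spec (A i)
    · simpa using hx
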